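/- In the cost model where accessing the item at position i costs i and each adjacent transposition costs 1, the optimal offline cost of serving a request sequence σ from initial list ρ0 is the same whether list reorganizations are charged by the total number of adjacent transpositions used or only by the number of paid transpositions (transpositions not moving the just-accessed item forward). -/

import Mathlib

open Finset

variable {α : Type*} [DecidableEq α] [Inhabited α]

/-- Swap the items at adjacent positions `i` and `i+1` (0-indexed). -/
def swapAdj (i : ℕ) (L : List α) : List α :=
  if i + 1 < L.length then
    (L.set i (L.getD (i+1) default)).set (i+1) (L.getD i default)
  else L

/-- Apply a sequence of adjacent transpositions (given by their positions). -/
def applySwaps (ops : List ℕ) (L : List α) : List α :=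
  ops.foldl (fun M i => swapAdj i M) L

/-- Element transfer: move the item at position `k` to position `j` (0-indexed),
leaving the relative order of all other items unchanged. -/
def elemTransfer (k j : ℕ) (L : List α) : List α :=
  (L.eraseIdx k).insertIdx j (L.getD k default)

/-- Subset transfer: move the items of `S` (a subset of the items preceding `a`)
to immediately after `a`, preserving relative orders. -/
def subsetTransfer (a : α) (S : Finset α) (L : List α) : List α :=
  ((L.take (L.idxOf a)).filter (fun x => x ∉ S)) ++ [a]
    ++ ((L.take (L.idxOf a)).filter (fun x => x ∈ S)) ++ L.drop (L.idxOf a + 1)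

/-- Number of inversions between two orderings of the same items: the number of
(unordered) pairs whose relative order differs. -/
def invCount (L M : List α) : ℕ :=
  ((L.toFinset ×ˢ L.toFinset).filter
    (fun p => L.idxOf p.1 < L.idxOf p.2 ∧ M.idxOf p.2 < M.idxOf p.1)).card

/-- Configurations of an offline strategy: before serving request `i` the list is
`conf ρ0 σ ops free i`; to serve request `i` the strategy first applies the (paid)
adjacent transpositions `ops i`, then accesses `σ i`, and finally moves the just-accessed
item `σ i` forward by (up to) `free i` positions using free transpositions. -/
def conf (ρ0 : List α) (σ : ℕ → α) (ops : ℕ → List ℕ) (free : ℕ → ℕ) : ℕ → List α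
  | 0 => ρ0
  | i + 1 =>
      let M := applySwaps (ops i) (conf ρ0 σ ops free i)
      elemTransfer (M.idxOf (σ i)) (M.idxOf (σ i) - free i) M

/-- The access cost of request `i`: the position (1-indexed) of `σ i` at access time. -/
def accessCost (ρ0 : List α) (σ : ℕ → α) (ops : ℕ → List ℕ) (free : ℕ → ℕ) (i : ℕ) : ℕ :=
  (applySwaps (ops i) (conf ρ0 σ ops free i)).idxOf (σ i) + 1

/-- The number of free transpositions actually used at step `i`. -/
def freeUsed (ρ0 : List α) (σ : ℕ → α) (ops : ℕ → List ℕ) (free : ℕ → ℕ) (i : ℕ) : ℕ :=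
  min (free i) ((applySwaps (ops i) (conf ρ0 σ ops free i)).idxOf (σ i))

/-- Total cost when every transposition (free or paid) is charged. -/
def costFull (ρ0 : List α) (σ : ℕ → α) (m : ℕ) (ops : ℕ → List ℕ) (free : ℕ → ℕ) : ℕ :=
  ∑ i ∈ Finset.range m,
    ((ops i).length + freeUsed ρ0 σ ops free i + accessCost ρ0 σ ops free i)

/-- Total cost when only paid transpositions are charged (free transpositions,
which move the just-accessed item forward immediately after its access, are free). -/
def costPaid (ρ0 : List α) (σ : ℕ → α) (m : ℕ) (ops : ℕ → List ℕ) (free : ℕ → ℕ) : ℕ :=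
  ∑ i ∈ Finset.range m, ((ops i).length + accessCost ρ0 σ ops free i)

set_option linter.unusedSectionVars false

theorem insertIdx_eq' (x : α) : ∀ (l : List α), ∀ n ≤ l.length, l.insertIdx n x = l.take n ++ x :: l.drop n := by
  intro l
  induction l with
  | nil => intro n hn; simp_all
  | cons a l ih =>
    intro n hn
    cases n with
    | zero => simp
    | succ n => simp [List.insertIdx_succ_cons, ih n (by simpa using hn)]

theorem elemTransfer_rep {k j : ℕ} {L : List α} (hj : j ≤ k) (hk : k < L.length) :
    elemTransfer k j L =
      (L.eraseIdx k).take j ++ L.getD k default :: (L.eraseIdx k).drop j := by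
  rw [elemTransfer, insertIdx_eq']
  rw [List.length_eraseIdx_of_lt hk]; omega

theorem length_elemTransfer {k j : ℕ} {L : List α} (hj : j ≤ k) (hk : k < L.length) :
    (elemTransfer k j L).length = L.length := by
  rw [elemTransfer, List.length_insertIdx_of_le_length (by rw [List.length_eraseIdx_of_lt hk]; omega),
    List.length_eraseIdx_of_lt hk]
  omega

theorem elemTransfer_perm {k j : ℕ} {L : List α} (hj : j ≤ k) (hk : k < L.length) :
    (elemTransfer k j L).Perm L := by
  rw [elemTransfer_rep hj hk]
  refine List.perm_middle.trans ?_
  rw [List.take_append_drop]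
  rw [List.eraseIdx_eq_take_drop_succ]
  refine List.Perm.trans List.perm_middle.symm ?_
  rw [List.getD_eq_getElem _ _ hk]
  simp [List.getElem_cons_drop]

theorem elemTransfer_self {k : ℕ} {L : List α} (hk : k < L.length) :
    elemTransfer k k L = L := by
  rw [elemTransfer_rep le_rfl hk, List.eraseIdx_eq_take_drop_succ,
    List.take_append_of_le_length (by simp <;> omega), List.take_take, min_self,
    List.drop_append_of_le_length (by simp <;> omega), List.drop_eq_nil_of_le (by simp <;> omega),
    List.getD_eq_getElem _ _ hk, List.nil_append, List.getElem_cons_drop, List.take_append_drop]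

theorem elemTransfer_comp {k j j' : ℕ} {L : List α} (hj : j ≤ j') (hj' : j' ≤ k)
    (hk : k < L.length) :
    elemTransfer j' j (elemTransfer k j' L) = elemTransfer k j L := by
  have hlen : (L.eraseIdx k).length = L.length - 1 := List.length_eraseIdx_of_lt hk
  have hj'' : j' ≤ (L.eraseIdx k).length := by omega
  have hN : ((L.eraseIdx k).insertIdx j' (L.getD k default)).length = L.length := by
    rw [List.length_insertIdx_of_le_length hj'']; omega
  rw [elemTransfer, elemTransfer, elemTransfer, List.eraseIdx_insertIdx_self,
    List.getD_eq_getElem _ _ (by rw [hN]; omega),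
    List.getElem_insertIdx_self]

theorem swapAdj_eq {j : ℕ} {L : List α} (h : j + 1 < L.length) :
    swapAdj j L = elemTransfer (j+1) j L := by
  rw [swapAdj, if_pos h]
  have hlen : (elemTransfer (j+1) j L).length = L.length :=
    length_elemTransfer (Nat.le_succ j) h
  apply List.ext_getElem (by simp [hlen])
  intro i hi1 hi2
  simp only [elemTransfer] at hi2 ⊢
  have hj : j < L.length := by omega
  have hel : (L.eraseIdx (j+1)).length = L.length - 1 := List.length_eraseIdx_of_lt h
  simp only [List.length_set] at hi1
  rcases lt_trichotomy i j with hij | rfl | hij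
  · rw [List.getElem_set_ne (by omega), List.getElem_set_ne (by omega),
      List.getElem_insertIdx_of_lt hij, List.getElem_eraseIdx_of_lt (by omega) (by omega)]
  · rw [List.getElem_set_ne (by omega), List.getElem_set_self,
      List.getElem_insertIdx_self, List.getD_eq_getElem _ _ h]
  · rcases Nat.exists_eq_add_of_lt hij with ⟨c, rfl⟩
    have : (List.insertIdx (L.eraseIdx (j+1)) j (L.getD (j+1) default))[j + c + 1] =
        (L.eraseIdx (j+1))[j + c]'(by omega) := List.getElem_insertIdx_add_succ _ _ _ _ (by omega)
    rw [this]
    rcases Nat.eq_zero_or_pos c with rfl | hc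
    · rw [List.getElem_eraseIdx_of_lt (by omega) (by omega)]
      rw [List.getElem_set_self, List.getD_eq_getElem _ _ hj]
      congr 1
    · rw [List.getElem_eraseIdx_of_ge (by omega) (by omega),
        List.getElem_set_ne (by omega), List.getElem_set_ne (by omega)]

theorem indexOf_elemTransfer {j : ℕ} {M : List α} {x : α} (hnd : M.Nodup) (hx : x ∈ M)
    (hj : j ≤ M.idxOf x) :
    (elemTransfer (M.idxOf x) j M).idxOf x = j := by
  have hk : M.idxOf x < M.length := List.idxOf_lt_length_iff.2 hx
  have hgd : M.getD (M.idxOf x) default = x := by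
    rw [List.getD_eq_getElem _ _ hk, List.getElem_idxOf hk]
  have hnm : x ∉ M.eraseIdx (M.idxOf x) := by
    rw [List.eraseIdx_idxOf_eq_erase]
    exact fun hmem => hnd.not_mem_erase hmem
  rw [elemTransfer_rep hj hk, hgd, List.idxOf_append_of_notMem
    (fun hmem => hnm ((List.take_sublist _ _).subset hmem)),
    List.idxOf_cons_self, List.length_take, List.length_eraseIdx_of_lt hk]
  omega

def moveOps (p t : ℕ) : List ℕ := (List.range t).map (fun s => p - 1 - s)

@[simp] theorem length_moveOps (p t : ℕ) : (moveOps p t).length = t := by simp [moveOps]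

theorem applySwaps_append (a b : List ℕ) (L : List α) :
    applySwaps (a ++ b) L = applySwaps b (applySwaps a L) := by
  simp [applySwaps, List.foldl_append]

theorem swapAdj_perm (i : ℕ) (L : List α) : (swapAdj i L).Perm L := by
  by_cases h : i + 1 < L.length
  · rw [swapAdj_eq h]; exact elemTransfer_perm (Nat.le_succ i) h
  · rw [swapAdj, if_neg h]

theorem applySwaps_perm (ops : List ℕ) (L : List α) : (applySwaps ops L).Perm L := by
  induction ops generalizing L with
  | nil => exact List.Perm.refl L
  | cons a t ih => exact (ih (swapAdj a L)).trans (swapAdj_perm a L)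

theorem applySwaps_moveOps {p : ℕ} {L : List α} (hp : p < L.length) :
    ∀ t ≤ p, applySwaps (moveOps p t) L = elemTransfer p (p - t) L := by
  intro t
  induction t with
  | zero => intro _; simp [moveOps, applySwaps, elemTransfer_self hp]
  | succ t ih =>
    intro ht
    have ht' : t ≤ p := by omega
    rw [moveOps, List.range_succ, List.map_append, ← moveOps, applySwaps_append, ih ht']
    have hM : (elemTransfer p (p - t) L).length = L.length :=
      length_elemTransfer (by omega) hp
    have h1 : (p - 1 - t) + 1 = p - t := by omega
    show swapAdj (p-1-t) (elemTransfer p (p - t) L) = _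
    rw [swapAdj_eq (by rw [hM]; omega), h1, elemTransfer_comp (by omega) (by omega) hp]
    congr 1
    omega

theorem conf_perm (ρ0 : List α) (σ : ℕ → α) (ops : ℕ → List ℕ) (free : ℕ → ℕ)
    (hσ : ∀ i, σ i ∈ ρ0) : ∀ i, (conf ρ0 σ ops free i).Perm ρ0 := by
  intro i
  induction i with
  | zero => exact List.Perm.refl _
  | succ i ih =>
    have hM : (applySwaps (ops i) (conf ρ0 σ ops free i)).Perm ρ0 :=
      (applySwaps_perm _ _).trans ih
    have hmem : σ i ∈ applySwaps (ops i) (conf ρ0 σ ops free i) := hM.mem_iff.2 (hσ i)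
    exact (elemTransfer_perm (Nat.sub_le _ _) (List.idxOf_lt_length_iff.2 hmem)).trans hM

theorem exists_full_eq_paid (ρ0 : List α) (σ : ℕ → α) (m : ℕ)
    (hnd : ρ0.Nodup) (hσ : ∀ i, σ i ∈ ρ0) (ops : ℕ → List ℕ) (free : ℕ → ℕ) :
    ∃ ops' free', costFull ρ0 σ m ops' free' = costPaid ρ0 σ m ops free := by
  set P : ℕ → ℕ := fun i => (applySwaps (ops i) (conf ρ0 σ ops free i)).idxOf (σ i) with hP
  set T : ℕ → ℕ := fun i => min (free i) (P i) with hT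
  set G : ℕ → List ℕ := fun i => ops i ++ moveOps (P i) (T i) with hG
  refine ⟨G, fun _ => 0, ?_⟩
  have step : ∀ i, conf ρ0 σ G (fun _ => 0) i = conf ρ0 σ ops free i →
      applySwaps (G i) (conf ρ0 σ G (fun _ => 0) i)
        = elemTransfer (P i) (P i - T i) (applySwaps (ops i) (conf ρ0 σ ops free i))
      ∧ (applySwaps (G i) (conf ρ0 σ G (fun _ => 0) i)).idxOf (σ i) = P i - T i := by
    intro i ih
    have hcp : (conf ρ0 σ ops free i).Perm ρ0 := conf_perm ρ0 σ ops free hσ i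
    have hMperm : (applySwaps (ops i) (conf ρ0 σ ops free i)).Perm ρ0 :=
      (applySwaps_perm _ _).trans hcp
    have hmem : σ i ∈ applySwaps (ops i) (conf ρ0 σ ops free i) := hMperm.mem_iff.2 (hσ i)
    have hPi : P i < (applySwaps (ops i) (conf ρ0 σ ops free i)).length :=
      List.idxOf_lt_length_iff.2 hmem
    have hMnd : (applySwaps (ops i) (conf ρ0 σ ops free i)).Nodup := hMperm.nodup_iff.2 hnd
    have h1 : applySwaps (G i) (conf ρ0 σ G (fun _ => 0) i)
        = elemTransfer (P i) (P i - T i) (applySwaps (ops i) (conf ρ0 σ ops free i)) := by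
      rw [ih, hG, applySwaps_append, applySwaps_moveOps hPi (T i) (min_le_right _ _)]
    refine ⟨h1, ?_⟩
    rw [h1]
    exact indexOf_elemTransfer hMnd hmem (Nat.sub_le _ _)
  have hconf : ∀ i, conf ρ0 σ G (fun _ => 0) i = conf ρ0 σ ops free i := by
    intro i
    induction i with
    | zero => rfl
    | succ i ih =>
      obtain ⟨h1, h2⟩ := step i ih
      have hcp : (conf ρ0 σ ops free i).Perm ρ0 := conf_perm ρ0 σ ops free hσ i
      have hMperm : (applySwaps (ops i) (conf ρ0 σ ops free i)).Perm ρ0 :=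
        (applySwaps_perm _ _).trans hcp
      have hmem : σ i ∈ applySwaps (ops i) (conf ρ0 σ ops free i) := hMperm.mem_iff.2 (hσ i)
      have hPi : P i < (applySwaps (ops i) (conf ρ0 σ ops free i)).length :=
        List.idxOf_lt_length_iff.2 hmem
      show elemTransfer _ _ _ = elemTransfer _ _ _
      rw [h2, h1, Nat.sub_zero,
        elemTransfer_self (by rw [length_elemTransfer (Nat.sub_le _ _) hPi]; omega)]
      have hPi' : List.idxOf (σ i) (applySwaps (ops i) (conf ρ0 σ ops free i)) = P i := rfl
      have : P i - free i = P i - T i := by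
        rw [hT]; simp only; omega
      rw [hPi', this]
  rw [costFull, costPaid]
  refine Finset.sum_congr rfl fun i _ => ?_
  obtain ⟨h1, h2⟩ := step i (hconf i)
  have hTP : T i ≤ P i := min_le_right _ _
  have hacc : accessCost ρ0 σ G (fun _ => 0) i = P i - T i + 1 := by
    rw [accessCost, h2]
  have hfu : freeUsed ρ0 σ G (fun _ => 0) i = 0 := by
    rw [freeUsed]; simp
  have hlen : (G i).length = (ops i).length + T i := by
    rw [hG]; simp [length_moveOps]
  have hPi' : List.idxOf (σ i) (applySwaps (ops i) (conf ρ0 σ ops free i)) = P i := rfl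
  rw [hacc, hfu, hlen, accessCost, hPi']
  omega

/-- The optimal offline cost of serving a request sequence `σ` of length
`m` from the initial list `ρ0` is the same whether list reorganizations are charged by the
total number of adjacent transpositions used or only by the number of paid transpositions. -/
theorem optimal_full_eq_optimal_paid (ρ0 : List α) (σ : ℕ → α) (m : ℕ)
    (hnd : ρ0.Nodup) (hσ : ∀ i, σ i ∈ ρ0) :
    sInf {c : ℕ | ∃ ops free, c = costFull ρ0 σ m ops free}
      = sInf {c : ℕ | ∃ ops free, c = costPaid ρ0 σ m ops free} := by
  have hpf : ∀ ops free, costPaid ρ0 σ m ops free ≤ costFull ρ0 σ m ops free := by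
    intro ops free
    refine Finset.sum_le_sum fun i _ => ?_
    omega
  have hne1 : {c : ℕ | ∃ ops free, c = costFull ρ0 σ m ops free}.Nonempty :=
    ⟨_, fun _ => [], fun _ => 0, rfl⟩
  have hne2 : {c : ℕ | ∃ ops free, c = costPaid ρ0 σ m ops free}.Nonempty :=
    ⟨_, fun _ => [], fun _ => 0, rfl⟩
  apply le_antisymm
  · obtain ⟨ops, free, hc⟩ := Nat.sInf_mem hne2
    obtain ⟨ops', free', he⟩ := exists_full_eq_paid ρ0 σ m hnd hσ ops free
    calc sInf {c : ℕ | ∃ ops free, c = costFull ρ0 σ m ops free}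
        ≤ costFull ρ0 σ m ops' free' := Nat.sInf_le ⟨ops', free', rfl⟩
      _ = costPaid ρ0 σ m ops free := he
      _ = _ := hc.symm
  · obtain ⟨ops, free, hc⟩ := Nat.sInf_mem hne1
    calc sInf {c : ℕ | ∃ ops free, c = costPaid ρ0 σ m ops free}
        ≤ costPaid ρ0 σ m ops free := Nat.sInf_le ⟨ops, free, rfl⟩
      _ ≤ costFull ρ0 σ m ops free := hpf ops free
      _ = _ := hc.symm
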